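/- Let G=(V0,V1,E,Ω) be a Müller game and let W∈Ω be such that the connectivity game on the arena of G(W) is forced-connected and W is not a 1-trap in G. Let G_W be Horn's construction for W, with new player-1 vertex 𝐖. Then Win_0(G_W)\{𝐖} ⊆ Win_0(G). -/

import Mathlib

namespace Games

universe u

variable {V : Type u}

/-- A Müller game: player 0's positions `V0`, player 1's positions `V1`, the edge set
`E` and the collection `Omega` of winning sets. -/
structure MullerGame (V : Type u) where
  V0 : Set V
  V1 : Set V
  E : Set (V × V)
  Omega : Set (Set V)

namespace MullerGame

/-- The vertex set `V = V0 ∪ V1`. -/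
def verts (G : MullerGame V) : Set V := G.V0 ∪ G.V1

/-- Player `σ`'s positions (`false` is player 0, `true` is player 1). -/
def pos (G : MullerGame V) (σ : Bool) : Set V := cond σ G.V1 G.V0

/-- The subgame `G(S)` on the vertex set `S`, with edges `E ∩ (S × S)` and winning
sets `Ω ∩ 2^S`. -/
def subgame (G : MullerGame V) (S : Set V) : MullerGame V :=
  ⟨G.V0 ∩ S, G.V1 ∩ S, {e | e ∈ G.E ∧ e.1 ∈ S ∧ e.2 ∈ S}, {W | W ∈ G.Omega ∧ W ⊆ S}⟩

end MullerGame

/-- Finite plays (histories) consistent with player `σ`'s strategy `s`, starting at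
`v0`: at a position of player `σ` the strategy's (legal) move is played, at a position
of the opponent any legal move may be played. -/
inductive HistM (G : MullerGame V) (σ : Bool) (s : List V → V) (v0 : V) : List V → Prop
  | base : HistM G σ s v0 [v0]
  | moveOwn (h : List V) (v : V) (hh : HistM G σ s v0 (h ++ [v])) (hv : v ∈ G.pos σ)
      (he : (v, s (h ++ [v])) ∈ G.E) : HistM G σ s v0 ((h ++ [v]) ++ [s (h ++ [v])])
  | moveOpp (h : List V) (v u : V) (hh : HistM G σ s v0 (h ++ [v])) (hv : v ∈ G.pos (!σ))
      (he : (v, u) ∈ G.E) : HistM G σ s v0 ((h ++ [v]) ++ [u])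

/-- The prefix `ρ 0, …, ρ n` of an infinite sequence. -/
def prefixUpTo (ρ : ℕ → V) (n : ℕ) : List V := List.ofFn fun i : Fin (n + 1) => ρ i

/-- The set `Inf(ρ)` of vertices visited infinitely often by `ρ`. -/
def InfSet (ρ : ℕ → V) : Set V := {v | ∀ N, ∃ n, N ≤ n ∧ ρ n = v}

/-- `ρ` is an infinite play consistent with player `σ`'s strategy `s` from `v0`. -/
def InfPlayM (G : MullerGame V) (σ : Bool) (s : List V → V) (v0 : V) (ρ : ℕ → V) : Prop :=
  ∀ n, HistM G σ s v0 (prefixUpTo ρ n)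

/-- `s` is a winning strategy for player `σ` from `v0` in the Müller game `G`.
In all cases `σ`'s moves must be legal whenever a move is available. Player 0 must in
addition never get stuck (finite maximal plays are wins for player 1) and every
infinite consistent play `ρ` must satisfy `Inf(ρ) ∈ Ω`; for player 1 every infinite
consistent play `ρ` must satisfy `Inf(ρ) ∉ Ω`. -/
def WinsFrom (G : MullerGame V) (σ : Bool) (s : List V → V) (v0 : V) : Prop :=
  (∀ h v, HistM G σ s v0 (h ++ [v]) → v ∈ G.pos σ → (∃ u, (v, u) ∈ G.E) →
      (v, s (h ++ [v])) ∈ G.E) ∧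
    (if σ = true then
      ∀ ρ : ℕ → V, InfPlayM G σ s v0 ρ → InfSet ρ ∉ G.Omega
    else
      (∀ h v, HistM G σ s v0 (h ++ [v]) → ∃ u, (v, u) ∈ G.E) ∧
        ∀ ρ : ℕ → V, InfPlayM G σ s v0 ρ → InfSet ρ ∈ G.Omega)

/-- `Win_σ(G)`: the set of vertices from which player `σ` has a winning strategy. -/
def WinSet (G : MullerGame V) (σ : Bool) : Set V :=
  {v | v ∈ G.verts ∧ ∃ s : List V → V, WinsFrom G σ s v}

/-- Player `σ` wins `G`, i.e. has a winning strategy from every vertex. -/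
def WinsEverywhere (G : MullerGame V) (σ : Bool) : Prop :=
  ∀ v ∈ G.verts, ∃ s : List V → V, WinsFrom G σ s v

/-- `S` determines a subgame of `G`. -/
def DeterminesSubgame (G : MullerGame V) (S : Set V) : Prop :=
  S.Nonempty ∧ S ⊆ G.verts ∧ ∀ v ∈ S, ∃ u ∈ S, (v, u) ∈ G.E

/-- `S` is a `σ`-trap in `G`: it determines a subgame and player `σ` cannot leave it. -/
def IsTrap (G : MullerGame V) (σ : Bool) (S : Set V) : Prop :=
  DeterminesSubgame G S ∧ ∀ v ∈ S ∩ G.pos σ, ∀ u, (v, u) ∈ G.E → u ∈ S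

/-- Membership in the `σ`-attractor of `X` inside the game restricted to `Y`. -/
inductive InAttr (G : MullerGame V) (σ : Bool) (X Y : Set V) : V → Prop
  | base (v : V) (hY : v ∈ Y) (hX : v ∈ X) : InAttr G σ X Y v
  | own (v u : V) (hY : v ∈ Y) (hp : v ∈ G.pos σ) (he : (v, u) ∈ G.E) (huY : u ∈ Y)
      (hu : InAttr G σ X Y u) : InAttr G σ X Y v
  | opp (v : V) (hY : v ∈ Y) (hp : v ∈ G.pos (!σ)) (hne : ∃ u ∈ Y, (v, u) ∈ G.E)
      (hall : ∀ u, (v, u) ∈ G.E → u ∈ Y → InAttr G σ X Y u) : InAttr G σ X Y v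

/-- `Attr_σ(X, G(Y))`: the set of vertices of `Y` from which player `σ` can force the
token into `X` within `Y`. -/
def Attr (G : MullerGame V) (σ : Bool) (X Y : Set V) : Set V := {v | InAttr G σ X Y v}

/-- The connectivity game played on the arena of `G` restricted to `S`: player 0 wins
an infinite play iff the set of vertices visited infinitely often is the whole vertex
set of the restricted arena. -/
def connGameOn (G : MullerGame V) (S : Set V) : MullerGame V :=
  ⟨G.V0 ∩ S, G.V1 ∩ S, {e | e ∈ G.E ∧ e.1 ∈ S ∧ e.2 ∈ S},
    {(G.V0 ∩ S) ∪ (G.V1 ∩ S)}⟩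

/-- The arena of `G(S)` is forced-connected: player 0 wins the connectivity game on it
from every vertex. -/
def ForcedConnectedOn (G : MullerGame V) (S : Set V) : Prop :=
  WinsEverywhere (connGameOn G S) false

/-- Horn's construction `G_W`, with the fresh player-1 vertex `w` playing the role
of `𝐖`. -/
def horn (G : MullerGame V) (W : Set V) (w : V) : MullerGame V where
  V0 := G.V0
  V1 := G.V1 ∪ {w}
  E := G.E ∪ (G.V0 ∩ W) ×ˢ ({w} : Set V) ∪
    ({w} : Set V) ×ˢ ({u | ∃ v ∈ G.V1 ∩ W, (v, u) ∈ G.E} \ W)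
  Omega := (G.Omega ∪ {S | ∃ W' ∈ G.Omega, W ⊂ W' ∧ S = W' ∪ {w}}) \
    ({W' | W' ∈ G.Omega ∧ W ⊂ W'} ∪ {W})


/-! ### Auxiliary machinery for Statement 14 -/

section Aux

variable {G : MullerGame V} {W : Set V} {w v0 : V} {s : List V → V} {σ : Bool}

lemma eq_append_getLast {l : List V} {a : V} (h : l.getLast? = some a) :
    ∃ l', l = l' ++ [a] := by
  have hne : l ≠ [] := by rintro rfl; simp at h
  have h2 := List.dropLast_append_getLast hne
  rw [List.getLast?_eq_getLast hne, Option.some_inj] at h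
  exact ⟨l.dropLast, by rw [← h]; exact h2.symm⟩

lemma HistM.ne_nil {l : List V} (h : HistM G σ s v0 l) : l ≠ [] := by
  cases h <;> simp

lemma HistM.getLast?_mem_verts : True := trivial

/-- Histories are closed under (nonempty) prefixes. -/
lemma HistM.take_succ {l : List V} (h : HistM G σ s v0 l) (j : ℕ) :
    HistM G σ s v0 (l.take (j + 1)) := by
  induction h with
  | base =>
      have : (j : ℕ) + 1 ≥ 1 := by omega
      rcases Nat.exists_eq_add_of_le this with ⟨k, hk⟩
      simp [List.take_succ_cons]
      exact HistM.base
  | moveOwn h v hh hv he ih =>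
      rcases le_or_gt (j + 1) (h ++ [v]).length with hle | hlt
      · rw [List.take_append_of_le_length hle]; exact ih
      · rw [List.take_of_length_le (by simp at hlt ⊢; omega)]
        exact HistM.moveOwn h v hh hv he
  | moveOpp h v u hh hv he ih =>
      rcases le_or_gt (j + 1) (h ++ [v]).length with hle | hlt
      · rw [List.take_append_of_le_length hle]; exact ih
      · rw [List.take_of_length_le (by simp at hlt ⊢; omega)]
        exact HistM.moveOpp h v u hh hv he

lemma prefixUpTo_zero (ρ : ℕ → V) : prefixUpTo ρ 0 = [ρ 0] := by
  simp [prefixUpTo]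

lemma prefixUpTo_succ (ρ : ℕ → V) (n : ℕ) :
    prefixUpTo ρ (n + 1) = prefixUpTo ρ n ++ [ρ (n + 1)] := by
  unfold prefixUpTo
  rw [List.ofFn_succ']
  simp [Fin.castSucc]

lemma prefixUpTo_length (ρ : ℕ → V) (n : ℕ) : (prefixUpTo ρ n).length = n + 1 := by
  simp [prefixUpTo]

lemma prefixUpTo_getLast? (ρ : ℕ → V) (n : ℕ) :
    (prefixUpTo ρ n).getLast? = some (ρ n) := by
  cases n with
  | zero => simp [prefixUpTo_zero]
  | succ n => rw [prefixUpTo_succ]; simp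

lemma prefixUpTo_getElem (ρ : ℕ → V) (n k : ℕ) (hk : k < n + 1) :
    (prefixUpTo ρ n)[k]'(by rw [prefixUpTo_length]; exact hk) = ρ k := by
  unfold prefixUpTo
  rw [List.getElem_ofFn]

lemma pos_false (G : MullerGame V) : G.pos false = G.V0 := rfl

lemma pos_true (G : MullerGame V) : G.pos true = G.V1 := rfl

/-- Unfolded form of `WinsFrom` for player 0. -/
lemma winsFrom_false_iff (G : MullerGame V) (s : List V → V) (v0 : V) :
    WinsFrom G false s v0 ↔
      (∀ h v, HistM G false s v0 (h ++ [v]) → v ∈ G.pos false → (∃ u, (v, u) ∈ G.E) →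
          (v, s (h ++ [v])) ∈ G.E) ∧
        (∀ h v, HistM G false s v0 (h ++ [v]) → ∃ u, (v, u) ∈ G.E) ∧
        ∀ ρ : ℕ → V, InfPlayM G false s v0 ρ → InfSet ρ ∈ G.Omega := by
  unfold WinsFrom
  simp

/-- The legality clause applied to a history given via its last element. -/
lemma legal_at {l : List V} {v : V}
    (hleg : ∀ h v, HistM G σ s v0 (h ++ [v]) → v ∈ G.pos σ → (∃ u, (v, u) ∈ G.E) →
      (v, s (h ++ [v])) ∈ G.E)
    (hl : HistM G σ s v0 l) (hv : l.getLast? = some v) (hp : v ∈ G.pos σ)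
    (hne : ∃ u, (v, u) ∈ G.E) : (v, s l) ∈ G.E := by
  obtain ⟨l', rfl⟩ := eq_append_getLast hv
  exact hleg l' v hl hp hne

lemma nostuck_at {l : List V} {v : V}
    (hns : ∀ h v, HistM G false s v0 (h ++ [v]) → ∃ u, (v, u) ∈ G.E)
    (hl : HistM G false s v0 l) (hv : l.getLast? = some v) : ∃ u, (v, u) ∈ G.E := by
  obtain ⟨l', rfl⟩ := eq_append_getLast hv
  exact hns l' v hl

-- One step of the simulation machine, processing the reversed history.
open Classical in
noncomputable def simR (G : MullerGame V) (W : Set V) (w : V) (s : List V → V) :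
    List V → List V × Option (V × List V)
  | [] => ([], none)
  | [v] => ([v], none)
  | u :: v :: rest =>
    match simR G W w s (v :: rest) with
    | (sh, none) =>
        if v ∈ G.V0 ∧ v ∈ W ∧ s sh = w ∧ u ∈ W then (sh ++ [w], some (v, [v, u]))
        else (sh ++ [u], none)
    | (sh, some (a, ph)) =>
        if u ∈ W then (sh, some (a, ph ++ [u])) else (sh ++ [u], none)

/-- The simulation of a history. -/
noncomputable def simH (G : MullerGame V) (W : Set V) (w : V) (s : List V → V)
    (h : List V) : List V × Option (V × List V) :=
  simR G W w s h.reverse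

lemma simH_singleton (v : V) : simH G W w s [v] = ([v], none) := by
  simp [simH, simR]

open Classical in
lemma simH_snoc {l : List V} {v : V} (hl : l.getLast? = some v) (u : V) :
    simH G W w s (l ++ [u]) =
      match simH G W w s l with
      | (sh, none) =>
          if v ∈ G.V0 ∧ v ∈ W ∧ s sh = w ∧ u ∈ W then (sh ++ [w], some (v, [v, u]))
          else (sh ++ [u], none)
      | (sh, some (a, ph)) =>
          if u ∈ W then (sh, some (a, ph ++ [u])) else (sh ++ [u], none) := by
  obtain ⟨l', rfl⟩ := eq_append_getLast hl
  show simR G W w s (l' ++ [v] ++ [u]).reverse = _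
  rw [show (l' ++ [v] ++ [u]).reverse = u :: v :: l'.reverse by simp]
  rw [show (simH G W w s (l' ++ [v])) = simR G W w s (v :: l'.reverse) by
    simp [simH]]
  rfl

-- Horn's simulating strategy.
open Classical in
noncomputable def tstr (G : MullerGame V) (W : Set V) (w : V) (s : List V → V)
    (sc : V → List V → V) (h : List V) : V :=
  match simH G W w s h, h.getLast? with
  | (sh, none), some v => if v ∈ G.V0 ∧ v ∈ W ∧ s sh = w then sc v [v] else s sh
  | (sh, none), none => s sh
  | (_, some (a, ph)), _ => sc a ph

open Classical in
lemma tstr_out {sc : V → List V → V} {h sh : List V} {v : V}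
    (hsim : simH G W w s h = (sh, none)) (hlast : h.getLast? = some v) :
    tstr G W w s sc h = if v ∈ G.V0 ∧ v ∈ W ∧ s sh = w then sc v [v] else s sh := by
  unfold tstr
  rw [hsim, hlast]

lemma tstr_in {sc : V → List V → V} {h sh : List V} {a : V} {ph : List V}
    (hsim : simH G W w s h = (sh, some (a, ph))) :
    tstr G W w s sc h = sc a ph := by
  unfold tstr
  rw [hsim]

open Classical in
lemma simH_snoc_out {l sh : List V} {v : V}
    (hl : l.getLast? = some v) (hsim : simH G W w s l = (sh, none)) (u : V) :
    simH G W w s (l ++ [u]) =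
      if v ∈ G.V0 ∧ v ∈ W ∧ s sh = w ∧ u ∈ W then (sh ++ [w], some (v, [v, u]))
      else (sh ++ [u], none) := by
  rw [simH_snoc hl u, hsim]

open Classical in
lemma simH_snoc_in {l sh ph : List V} {v a : V}
    (hl : l.getLast? = some v) (hsim : simH G W w s l = (sh, some (a, ph))) (u : V) :
    simH G W w s (l ++ [u]) =
      if u ∈ W then (sh, some (a, ph ++ [u])) else (sh ++ [u], none) := by
  rw [simH_snoc hl u, hsim]

variable {sc : V → List V → V}

/-- The invariant of the simulation along consistent histories. -/
def SimInv (G : MullerGame V) (W : Set V) (w : V) (s : List V → V) (sc : V → List V → V)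
    (v0 : V) (h : List V) : Prop :=
  (∀ x ∈ h, x ∈ G.verts) ∧
  (∀ sh, simH G W w s h = (sh, none) →
     HistM (horn G W w) false s v0 sh ∧ sh.getLast? = h.getLast?) ∧
  (∀ sh a ph, simH G W w s h = (sh, some (a, ph)) →
     HistM (horn G W w) false s v0 sh ∧ sh.getLast? = some w ∧
     HistM (connGameOn G W) false (sc a) a ph ∧ a ∈ G.V0 ∧ a ∈ W ∧
     ph.getLast? = h.getLast? ∧ (∀ x ∈ ph, x ∈ W) ∧ ph <:+ h)

theorem simInv_of_hist
    (hdisj : Disjoint G.V0 G.V1)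
    (hEsub : G.E ⊆ (G.V0 ×ˢ G.V1) ∪ (G.V1 ×ˢ G.V0))
    (hv0 : v0 ∈ G.verts)
    (hs : WinsFrom (horn G W w) false s v0)
    (hsc : ∀ v, v ∈ G.verts → v ∈ W → WinsFrom (connGameOn G W) false (sc v) v)
    {h : List V} (hh : HistM G false (tstr G W w s sc) v0 h) :
    SimInv G W w s sc v0 h := by
  obtain ⟨hsleg, hsns, -⟩ := (winsFrom_false_iff _ _ _).mp hs
  have vert2 : ∀ {x y : V}, (x, y) ∈ G.E → y ∈ G.verts := by
    intro x y hxy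
    rcases hEsub hxy with h' | h'
    · exact Or.inr h'.2
    · exact Or.inl h'.2
  -- the first move of the connectivity strategy from `v`
  have firstMove : ∀ v, v ∈ G.V0 → v ∈ W → (v, sc v [v]) ∈ (connGameOn G W).E := by
    intro v hv1 hv2
    obtain ⟨scleg, scns, -⟩ := (winsFrom_false_iff _ _ _).mp (hsc v (Or.inl hv1) hv2)
    have hb : HistM (connGameOn G W) false (sc v) v ([] ++ [v]) := HistM.base
    exact scleg [] v hb (show v ∈ G.V0 ∩ W from ⟨hv1, hv2⟩) (scns [] v hb)
  -- a move of the connectivity strategy during a phase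
  have phaseMove : ∀ a ph v, a ∈ G.V0 → a ∈ W →
      HistM (connGameOn G W) false (sc a) a ph → ph.getLast? = some v →
      v ∈ G.V0 → v ∈ W → (v, sc a ph) ∈ (connGameOn G W).E := by
    intro a ph v ha1 ha2 hph hlast hv1 hv2
    obtain ⟨scleg, scns, -⟩ := (winsFrom_false_iff _ _ _).mp (hsc a (Or.inl ha1) ha2)
    exact legal_at scleg hph hlast (show v ∈ G.V0 ∩ W from ⟨hv1, hv2⟩)
      (nostuck_at scns hph hlast)
  induction hh with
  | base =>
      refine ⟨by simpa using hv0, ?_, ?_⟩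
      · intro sh hsim
        rw [simH_singleton] at hsim
        injection hsim with h1 h2
        subst h1
        exact ⟨HistM.base, rfl⟩
      · intro sh a ph hsim
        rw [simH_singleton] at hsim
        injection hsim with h1 h2
        simp at h2
  | moveOwn h v hh1 hv he ih =>
      obtain ⟨ihverts, ihout, ihin⟩ := ih
      have hl : (h ++ [v]).getLast? = some v := List.getLast?_concat
      have hvV0 : v ∈ G.V0 := hv
      rcases hsimeq : simH G W w s (h ++ [v]) with ⟨sh, st⟩
      cases st with
      | none =>
          obtain ⟨hshH, hshlast⟩ := ihout sh hsimeq
          have hshv : sh.getLast? = some v := hshlast.trans hl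
          obtain ⟨sh₀, hsh₀⟩ := eq_append_getLast hshv
          have htu := tstr_out (sc := sc) hsimeq hl
          by_cases hcond : v ∈ G.V0 ∧ v ∈ W ∧ s sh = w
          · -- entering a phase
            rw [if_pos hcond] at htu
            have hedge : (v, sc v [v]) ∈ (connGameOn G W).E := firstMove v hcond.1 hcond.2.1
            have huW : tstr G W w s sc (h ++ [v]) ∈ W := by rw [htu]; exact hedge.2.2
            rw [htu] at he ⊢
            have hsim' : simH G W w s ((h ++ [v]) ++ [sc v [v]]) =
                (sh ++ [w], some (v, [v, sc v [v]])) := by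
              rw [simH_snoc_out hl hsimeq]
              rw [if_pos ⟨hcond.1, hcond.2.1, hcond.2.2, htu ▸ huW⟩]
            refine ⟨?_, ?_, ?_⟩
            · intro x hx
              rcases List.mem_append.mp hx with hx | hx
              · exact ihverts x hx
              · simp at hx; subst hx; exact vert2 he
            · intro sh' hsim''
              rw [hsim'] at hsim''
              injection hsim'' with h1 h2
              simp at h2
            · intro sh' a' ph' hsim''
              rw [hsim'] at hsim''
              injection hsim'' with h1 h2
              injection h2 with h2
              injection h2 with h2a h2b
              subst h1; subst h2a; subst h2b
              have hlegmove : (v, s (sh₀ ++ [v])) ∈ (horn G W w).E := by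
                refine hsleg sh₀ v (hsh₀ ▸ hshH) hcond.1 ⟨_, Or.inl (Or.inl he)⟩
              have hHsh : HistM (horn G W w) false s v0 ((sh₀ ++ [v]) ++ [s (sh₀ ++ [v])]) :=
                HistM.moveOwn sh₀ v (hsh₀ ▸ hshH) hcond.1 hlegmove
              rw [← hsh₀, hcond.2.2] at hHsh
              refine ⟨hHsh, by simp, ?_, hcond.1, hcond.2.1, by simp, ?_, ?_⟩
              · have : HistM (connGameOn G W) false (sc v) v
                    (([] ++ [v]) ++ [sc v ([] ++ [v])]) :=
                  HistM.moveOwn [] v HistM.base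
                    (show v ∈ G.V0 ∩ W from ⟨hcond.1, hcond.2.1⟩)
                    (by simpa using hedge)
                simpa using this
              · intro x hx
                simp at hx
                rcases hx with rfl | rfl
                · exact hcond.2.1
                · exact htu ▸ huW
              · exact ⟨h, by simp⟩
          · -- staying outside
            rw [if_neg hcond] at htu
            have hcond4 : ¬(v ∈ G.V0 ∧ v ∈ W ∧ s sh = w ∧ tstr G W w s sc (h ++ [v]) ∈ W) := by
              intro hc; exact hcond ⟨hc.1, hc.2.1, hc.2.2.1⟩
            have hsim' : simH G W w s ((h ++ [v]) ++ [tstr G W w s sc (h ++ [v])]) =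
                (sh ++ [tstr G W w s sc (h ++ [v])], none) := by
              rw [simH_snoc_out hl hsimeq, if_neg hcond4]
            refine ⟨?_, ?_, ?_⟩
            · intro x hx
              rcases List.mem_append.mp hx with hx | hx
              · exact ihverts x hx
              · simp at hx; subst hx; exact vert2 he
            · intro sh' hsim''
              rw [hsim'] at hsim''
              injection hsim'' with h1 h2
              subst h1
              constructor
              · have hHsh : HistM (horn G W w) false s v0 ((sh₀ ++ [v]) ++ [s (sh₀ ++ [v])]) :=
                  HistM.moveOwn sh₀ v (hsh₀ ▸ hshH) hvV0
                    (Or.inl (Or.inl (show (v, s (sh₀ ++ [v])) ∈ G.E by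
                      rw [← hsh₀, ← htu]; exact he)))
                rw [← hsh₀, ← htu] at hHsh
                exact hHsh
              · simp
            · intro sh' a' ph' hsim''
              rw [hsim'] at hsim''
              injection hsim'' with h1 h2
              simp at h2
      | some apair =>
          rcases apair with ⟨a, ph⟩
          obtain ⟨hshH, hshw, hphH, haV0, haW, hphlast, hphW, hphsuf⟩ := ihin sh a ph hsimeq
          have hphv : ph.getLast? = some v := hphlast.trans hl
          obtain ⟨ph₀, hph₀⟩ := eq_append_getLast hphv
          have hvW : v ∈ W := hphW v (by rw [hph₀]; simp)
          have htu := tstr_in (sc := sc) hsimeq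
          have hedge : (v, sc a ph) ∈ (connGameOn G W).E :=
            phaseMove a ph v haV0 haW hphH hphv hvV0 hvW
          have huW : tstr G W w s sc (h ++ [v]) ∈ W := by rw [htu]; exact hedge.2.2
          have hsim' : simH G W w s ((h ++ [v]) ++ [tstr G W w s sc (h ++ [v])]) =
              (sh, some (a, ph ++ [tstr G W w s sc (h ++ [v])])) := by
            rw [simH_snoc_in hl hsimeq, if_pos huW]
          refine ⟨?_, ?_, ?_⟩
          · intro x hx
            rcases List.mem_append.mp hx with hx | hx
            · exact ihverts x hx
            · simp at hx; subst hx; exact vert2 he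
          · intro sh' hsim''
            rw [hsim'] at hsim''
            injection hsim'' with h1 h2
            simp at h2
          · intro sh' a' ph' hsim''
            rw [hsim'] at hsim''
            injection hsim'' with h1 h2
            injection h2 with h2
            injection h2 with h2a h2b
            subst h1; subst h2a; subst h2b
            refine ⟨hshH, hshw, ?_, haV0, haW, by simp, ?_, ?_⟩
            · have : HistM (connGameOn G W) false (sc a) a ((ph₀ ++ [v]) ++ [sc a (ph₀ ++ [v])]) :=
                HistM.moveOwn ph₀ v (hph₀ ▸ hphH)
                  (show v ∈ G.V0 ∩ W from ⟨hvV0, hvW⟩)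
                  (by rw [← hph₀]; exact hedge)
              rw [← hph₀] at this
              rw [htu, ← hph₀] at *
              exact this
            · intro x hx
              rcases List.mem_append.mp hx with hx | hx
              · exact hphW x hx
              · simp at hx; subst hx; exact huW
            · obtain ⟨pre, hpre⟩ := hphsuf
              exact ⟨pre, by rw [← List.append_assoc, hpre]⟩
  | moveOpp h v u hh1 hv he ih =>
      obtain ⟨ihverts, ihout, ihin⟩ := ih
      have hl : (h ++ [v]).getLast? = some v := List.getLast?_concat
      have hvV1 : v ∈ G.V1 := hv
      have hvnV0 : v ∉ G.V0 := fun hc => Set.disjoint_left.mp hdisj hc hvV1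
      rcases hsimeq : simH G W w s (h ++ [v]) with ⟨sh, st⟩
      cases st with
      | none =>
          obtain ⟨hshH, hshlast⟩ := ihout sh hsimeq
          have hshv : sh.getLast? = some v := hshlast.trans hl
          obtain ⟨sh₀, hsh₀⟩ := eq_append_getLast hshv
          have hcond4 : ¬(v ∈ G.V0 ∧ v ∈ W ∧ s sh = w ∧ u ∈ W) := fun hc => hvnV0 hc.1
          have hsim' : simH G W w s ((h ++ [v]) ++ [u]) = (sh ++ [u], none) := by
            rw [simH_snoc_out hl hsimeq, if_neg hcond4]
          refine ⟨?_, ?_, ?_⟩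
          · intro x hx
            rcases List.mem_append.mp hx with hx | hx
            · exact ihverts x hx
            · simp at hx; subst hx; exact vert2 he
          · intro sh' hsim''
            rw [hsim'] at hsim''
            injection hsim'' with h1 h2
            subst h1
            constructor
            · have hHsh : HistM (horn G W w) false s v0 ((sh₀ ++ [v]) ++ [u]) :=
                HistM.moveOpp sh₀ v u (hsh₀ ▸ hshH) (Or.inl hvV1) (Or.inl (Or.inl he))
              rw [← hsh₀] at hHsh
              exact hHsh
            · simp
          · intro sh' a' ph' hsim''
            rw [hsim'] at hsim''
            injection hsim'' with h1 h2
            simp at h2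
      | some apair =>
          rcases apair with ⟨a, ph⟩
          obtain ⟨hshH, hshw, hphH, haV0, haW, hphlast, hphW, hphsuf⟩ := ihin sh a ph hsimeq
          have hphv : ph.getLast? = some v := hphlast.trans hl
          obtain ⟨ph₀, hph₀⟩ := eq_append_getLast hphv
          have hvW : v ∈ W := hphW v (by rw [hph₀]; simp)
          by_cases huW : u ∈ W
          · -- staying inside the phase
            have hsim' : simH G W w s ((h ++ [v]) ++ [u]) = (sh, some (a, ph ++ [u])) := by
              rw [simH_snoc_in hl hsimeq, if_pos huW]
            refine ⟨?_, ?_, ?_⟩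
            · intro x hx
              rcases List.mem_append.mp hx with hx | hx
              · exact ihverts x hx
              · simp at hx; subst hx; exact vert2 he
            · intro sh' hsim''
              rw [hsim'] at hsim''
              injection hsim'' with h1 h2
              simp at h2
            · intro sh' a' ph' hsim''
              rw [hsim'] at hsim''
              injection hsim'' with h1 h2
              injection h2 with h2
              injection h2 with h2a h2b
              subst h1; subst h2a; subst h2b
              refine ⟨hshH, hshw, ?_, haV0, haW, by simp, ?_, ?_⟩
              · have : HistM (connGameOn G W) false (sc a) a ((ph₀ ++ [v]) ++ [u]) :=
                  HistM.moveOpp ph₀ v u (hph₀ ▸ hphH)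
                    (show v ∈ G.V1 ∩ W from ⟨hvV1, hvW⟩)
                    (show _ ∈ (connGameOn G W).E from ⟨he, hvW, huW⟩)
                rw [← hph₀] at this
                exact this
              · intro x hx
                rcases List.mem_append.mp hx with hx | hx
                · exact hphW x hx
                · simp at hx; subst hx; exact huW
              · obtain ⟨pre, hpre⟩ := hphsuf
                exact ⟨pre, by rw [← List.append_assoc, hpre]⟩
          · -- exiting the phase
            have hsim' : simH G W w s ((h ++ [v]) ++ [u]) = (sh ++ [u], none) := by
              rw [simH_snoc_in hl hsimeq, if_neg huW]
            obtain ⟨sh₁, hsh₁⟩ := eq_append_getLast hshw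
            refine ⟨?_, ?_, ?_⟩
            · intro x hx
              rcases List.mem_append.mp hx with hx | hx
              · exact ihverts x hx
              · simp at hx; subst hx; exact vert2 he
            · intro sh' hsim''
              rw [hsim'] at hsim''
              injection hsim'' with h1 h2
              subst h1
              constructor
              · have hHsh : HistM (horn G W w) false s v0 ((sh₁ ++ [w]) ++ [u]) :=
                  HistM.moveOpp sh₁ w u (hsh₁ ▸ hshH) (Or.inr rfl)
                    (Or.inr (Set.mem_prod.mpr ⟨rfl, ⟨v, ⟨hvV1, hvW⟩, he⟩, huW⟩))
                rw [← hsh₁] at hHsh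
                exact hHsh
              · simp
            · intro sh' a' ph' hsim''
              rw [hsim'] at hsim''
              injection hsim'' with h1 h2
              simp at h2

lemma scFirstMove (hsc : ∀ v, v ∈ G.verts → v ∈ W → WinsFrom (connGameOn G W) false (sc v) v)
    {v : V} (hv1 : v ∈ G.V0) (hv2 : v ∈ W) : (v, sc v [v]) ∈ (connGameOn G W).E := by
  obtain ⟨scleg, scns, -⟩ := (winsFrom_false_iff _ _ _).mp (hsc v (Or.inl hv1) hv2)
  have hb : HistM (connGameOn G W) false (sc v) v ([] ++ [v]) := HistM.base
  exact scleg [] v hb (show v ∈ G.V0 ∩ W from ⟨hv1, hv2⟩) (scns [] v hb)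

lemma scPhaseMove (hsc : ∀ v, v ∈ G.verts → v ∈ W → WinsFrom (connGameOn G W) false (sc v) v)
    {a v : V} {ph : List V} (ha1 : a ∈ G.V0) (ha2 : a ∈ W)
    (hph : HistM (connGameOn G W) false (sc a) a ph) (hlast : ph.getLast? = some v)
    (hv1 : v ∈ G.V0) (hv2 : v ∈ W) : (v, sc a ph) ∈ (connGameOn G W).E := by
  obtain ⟨scleg, scns, -⟩ := (winsFrom_false_iff _ _ _).mp (hsc a (Or.inl ha1) ha2)
  exact legal_at scleg hph hlast (show v ∈ G.V0 ∩ W from ⟨hv1, hv2⟩)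
    (nostuck_at scns hph hlast)

open Classical in
lemma simH_step (G : MullerGame V) (W : Set V) (w : V) (s : List V → V) (ρ : ℕ → V) (n : ℕ) :
    (∃ sh, simH G W w s (prefixUpTo ρ n) = (sh, none) ∧
       (simH G W w s (prefixUpTo ρ (n + 1)) = (sh ++ [ρ (n + 1)], none) ∨
        (simH G W w s (prefixUpTo ρ (n + 1)) = (sh ++ [w], some (ρ n, [ρ n, ρ (n + 1)])) ∧
          ρ n ∈ W ∧ ρ (n + 1) ∈ W))) ∨
    (∃ sh a ph, simH G W w s (prefixUpTo ρ n) = (sh, some (a, ph)) ∧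
       ((ρ (n + 1) ∈ W ∧
          simH G W w s (prefixUpTo ρ (n + 1)) = (sh, some (a, ph ++ [ρ (n + 1)]))) ∨
        (ρ (n + 1) ∉ W ∧
          simH G W w s (prefixUpTo ρ (n + 1)) = (sh ++ [ρ (n + 1)], none)))) := by
  have hl := prefixUpTo_getLast? ρ n
  rcases hsimeq : simH G W w s (prefixUpTo ρ n) with ⟨sh, st⟩
  cases st with
  | none =>
      left
      refine ⟨sh, rfl, ?_⟩
      rw [prefixUpTo_succ, simH_snoc_out hl hsimeq]
      by_cases hc : ρ n ∈ G.V0 ∧ ρ n ∈ W ∧ s sh = w ∧ ρ (n + 1) ∈ W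
      · right; rw [if_pos hc]; exact ⟨rfl, hc.2.1, hc.2.2.2⟩
      · left; rw [if_neg hc]
  | some ap =>
      obtain ⟨a, ph⟩ := ap
      right
      refine ⟨sh, a, ph, rfl, ?_⟩
      rw [prefixUpTo_succ, simH_snoc_in hl hsimeq]
      by_cases hc : ρ (n + 1) ∈ W
      · left; rw [if_pos hc]; exact ⟨hc, rfl⟩
      · right; rw [if_neg hc]; exact ⟨hc, rfl⟩

lemma simH_chain (G : MullerGame V) (W : Set V) (w : V) (s : List V → V) (ρ : ℕ → V) (n : ℕ) :
    (simH G W w s (prefixUpTo ρ n)).1 <+: (simH G W w s (prefixUpTo ρ (n + 1))).1 := by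
  rcases simH_step G W w s ρ n with ⟨sh, heq, hc⟩ | ⟨sh, a, ph, heq, hc⟩
  · rcases hc with h' | ⟨h', -, -⟩
    · rw [heq, h']; exact ⟨_, rfl⟩
    · rw [heq, h']; exact ⟨_, rfl⟩
  · rcases hc with ⟨-, h'⟩ | ⟨-, h'⟩
    · rw [heq, h']
    · rw [heq, h']; exact ⟨_, rfl⟩

lemma simH_chainLE (G : MullerGame V) (W : Set V) (w : V) (s : List V → V) (ρ : ℕ → V)
    {m n : ℕ} (hmn : m ≤ n) :
    (simH G W w s (prefixUpTo ρ m)).1 <+: (simH G W w s (prefixUpTo ρ n)).1 := by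
  induction n, hmn using Nat.le_induction with
  | base => exact List.prefix_rfl
  | succ n hmn ih => exact ih.trans (simH_chain G W w s ρ n)

lemma infSet_iff_count [DecidableEq V] (ρ : ℕ → V) (v : V) :
    v ∈ InfSet ρ ↔ ∀ m, ∃ n, m ≤ (prefixUpTo ρ n).count v := by
  have hmono : ∀ {n n' : ℕ}, n ≤ n' →
      (prefixUpTo ρ n).count v ≤ (prefixUpTo ρ n').count v := by
    intro n n' h
    induction n', h using Nat.le_induction with
    | base => exact le_rfl
    | succ n' h ih => rw [prefixUpTo_succ, List.count_append]; omega
  constructor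
  · intro hv m
    induction m with
    | zero => exact ⟨0, Nat.zero_le _⟩
    | succ m ihm =>
        obtain ⟨n, hn⟩ := ihm
        obtain ⟨n', hn', hval⟩ := hv (n + 1)
        refine ⟨n', ?_⟩
        have h1 : n' = (n' - 1) + 1 := by omega
        have h2 : (prefixUpTo ρ n').count v = (prefixUpTo ρ (n' - 1)).count v + 1 := by
          conv_lhs => rw [h1]
          rw [prefixUpTo_succ, List.count_append, ← h1, hval]
          simp
        have h3 := hmono (show n ≤ n' - 1 by omega)
        omega
  · intro hc
    by_contra hv
    simp only [InfSet, Set.mem_setOf_eq] at hv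
    push_neg at hv
    obtain ⟨N, hN⟩ := hv
    have hbd : ∀ n, (prefixUpTo ρ n).count v ≤ (prefixUpTo ρ N).count v := by
      intro n
      rcases le_total n N with h | h
      · exact hmono h
      · induction n, h using Nat.le_induction with
        | base => exact le_rfl
        | succ n h ih =>
            rw [prefixUpTo_succ, List.count_append]
            have hz : (([ρ (n + 1)] : List V).count v) = 0 :=
              List.count_eq_zero.mpr (by
                simp only [List.mem_singleton]
                exact fun h' => hN (n + 1) (by omega) h'.symm)
            omega
    obtain ⟨n, hn⟩ := hc ((prefixUpTo ρ N).count v + 1)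
    exact absurd (le_trans hn (hbd n)) (by omega)

lemma infSet_shift (ρ : ℕ → V) (m : ℕ) : InfSet (fun j => ρ (m + j)) = InfSet ρ := by
  ext v
  constructor
  · intro hv N
    obtain ⟨n, hn, he⟩ := hv N
    exact ⟨m + n, by omega, he⟩
  · intro hv N
    obtain ⟨n, hn, he⟩ := hv (m + N)
    refine ⟨n - m, by omega, ?_⟩
    show ρ (m + (n - m)) = v
    rw [show m + (n - m) = n by omega]
    exact he

theorem tstr_wins
    (hdisj : Disjoint G.V0 G.V1)
    (hEsub : G.E ⊆ (G.V0 ×ˢ G.V1) ∪ (G.V1 ×ˢ G.V0))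
    (hOm : ∀ W' ∈ G.Omega, W' ⊆ G.verts) (hW : W ∈ G.Omega)
    (hw : w ∉ G.verts) (hv0 : v0 ∈ G.verts)
    (hs : WinsFrom (horn G W w) false s v0)
    (hsc : ∀ v, v ∈ G.verts → v ∈ W → WinsFrom (connGameOn G W) false (sc v) v) :
    WinsFrom G false (tstr G W w s sc) v0 := by
  classical
  obtain ⟨hsleg, hsns, hswin⟩ := (winsFrom_false_iff _ _ _).mp hs
  have hinv : ∀ {h : List V}, HistM G false (tstr G W w s sc) v0 h →
      SimInv G W w s sc v0 h :=
    fun hh => simInv_of_hist hdisj hEsub hv0 hs hsc hh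
  rw [winsFrom_false_iff]
  refine ⟨?_, ?_, ?_⟩
  · -- legality of the strategy's moves
    intro h v hh hvpos hex
    obtain ⟨invV, invOut, invIn⟩ := hinv hh
    have hl : (h ++ [v]).getLast? = some v := List.getLast?_concat
    have hvV0 : v ∈ G.V0 := hvpos
    rcases hsimeq : simH G W w s (h ++ [v]) with ⟨sh, st⟩
    cases st with
    | none =>
        obtain ⟨hshH, hshlast⟩ := invOut sh hsimeq
        have hshv : sh.getLast? = some v := hshlast.trans hl
        rw [tstr_out (sc := sc) hsimeq hl]
        by_cases hcond : v ∈ G.V0 ∧ v ∈ W ∧ s sh = w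
        · rw [if_pos hcond]
          exact (scFirstMove hsc hcond.1 hcond.2.1).1
        · rw [if_neg hcond]
          have hE' : (v, s sh) ∈ (horn G W w).E := by
            obtain ⟨u, hu⟩ := hex
            exact legal_at hsleg hshH hshv hvV0 ⟨u, Or.inl (Or.inl hu)⟩
          rcases hE' with (hE' | hE') | hE'
          · exact hE'
          · exact absurd ⟨hE'.1.1, hE'.1.2, hE'.2⟩ hcond
          · exact absurd (hE'.1 ▸ Or.inl hvV0 : w ∈ G.verts) hw
    | some ap =>
        obtain ⟨a, ph⟩ := ap
        obtain ⟨-, -, hphH, haV0, haW, hphlast, hphW, -⟩ := invIn sh a ph hsimeq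
        have hphv : ph.getLast? = some v := hphlast.trans hl
        have hvW : v ∈ W := by
          obtain ⟨ph₀, rfl⟩ := eq_append_getLast hphv
          exact hphW v (by simp)
        rw [tstr_in hsimeq]
        exact (scPhaseMove hsc haV0 haW hphH hphv hvV0 hvW).1
  · -- never stuck
    intro h v hh
    obtain ⟨invV, invOut, invIn⟩ := hinv hh
    have hl : (h ++ [v]).getLast? = some v := List.getLast?_concat
    rcases hsimeq : simH G W w s (h ++ [v]) with ⟨sh, st⟩
    cases st with
    | none =>
        obtain ⟨hshH, hshlast⟩ := invOut sh hsimeq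
        have hshv : sh.getLast? = some v := hshlast.trans hl
        obtain ⟨u, hu⟩ := nostuck_at hsns hshH hshv
        rcases hu with (hu | hu) | hu
        · exact ⟨u, hu⟩
        · obtain ⟨-, hns', -⟩ := (winsFrom_false_iff _ _ _).mp (hsc v (Or.inl hu.1.1) hu.1.2)
          obtain ⟨u', hu'⟩ := hns' [] v HistM.base
          exact ⟨u', hu'.1⟩
        · exact absurd (hu.1 ▸ invV v (by simp) : w ∈ G.verts) hw
    | some ap =>
        obtain ⟨a, ph⟩ := ap
        obtain ⟨-, -, hphH, haV0, haW, hphlast, hphW, -⟩ := invIn sh a ph hsimeq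
        have hphv : ph.getLast? = some v := hphlast.trans hl
        obtain ⟨-, hns', -⟩ := (winsFrom_false_iff _ _ _).mp (hsc a (Or.inl haV0) haW)
        obtain ⟨u, hu⟩ := nostuck_at hns' hphH hphv
        exact ⟨u, hu.1⟩
  · -- infinite plays
    intro ρ hρ
    have hinvn : ∀ n, SimInv G W w s sc v0 (prefixUpTo ρ n) := fun n => hinv (hρ n)
    have hsim0 : simH G W w s (prefixUpTo ρ 0) = ([ρ 0], none) := by
      rw [prefixUpTo_zero]; exact simH_singleton _
    have RV : ∀ n, ρ n ∈ G.verts := by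
      intro n
      obtain ⟨l', hl'⟩ := eq_append_getLast (prefixUpTo_getLast? ρ n)
      exact (hinvn n).1 (ρ n) (by rw [hl']; simp)
    by_cases hA : ∃ N, ∀ n, N ≤ n → (simH G W w s (prefixUpTo ρ n)).2 ≠ none
    · -- Case A: eventually forever inside a single phase
      obtain ⟨N, hN⟩ := hA
      rcases hsimN : simH G W w s (prefixUpTo ρ N) with ⟨shN, stN⟩
      cases stN with
      | none => exact absurd (by rw [hsimN]) (hN N le_rfl)
      | some ap =>
        obtain ⟨a, ph⟩ := ap
        obtain ⟨-, -, invIn⟩ := hinvn N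
        obtain ⟨-, -, hphH, haV0, haW, hphlast, hphW, hphsuf⟩ := invIn shN a ph hsimN
        have ofFnsucc : ∀ k : ℕ, (List.ofFn fun i : Fin (k + 1) => ρ (N + 1 + ↑i)) =
            (List.ofFn fun i : Fin k => ρ (N + 1 + ↑i)) ++ [ρ (N + 1 + k)] := by
          intro k
          rw [List.ofFn_succ']
          simp [Fin.castSucc]
        have grow : ∀ k : ℕ, simH G W w s (prefixUpTo ρ (N + k)) =
            (shN, some (a, ph ++ List.ofFn fun i : Fin k => ρ (N + 1 + ↑i))) := by
          intro k
          induction k with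
          | zero => simpa using hsimN
          | succ k ihk =>
              rcases simH_step G W w s ρ (N + k) with ⟨sh', heq, hc⟩ |
                ⟨sh', a', ph', heq, hc⟩
              · rw [ihk] at heq
                injection heq with h1 h2
                simp at h2
              · rw [ihk] at heq
                injection heq with h1 h2
                injection h2 with h2
                injection h2 with h2a h2b
                subst h1; subst h2a; subst h2b
                rcases hc with ⟨-, h'⟩ | ⟨-, h'⟩
                · rw [show N + (k + 1) = N + k + 1 from rfl, h', ofFnsucc k,
                    show N + 1 + k = N + k + 1 from by omega, ← List.append_assoc]
                · exact absurd (by rw [h']) (hN (N + k + 1) (by omega))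
        obtain ⟨pre, hpre⟩ := hphsuf
        have hml : pre.length + ph.length = N + 1 := by
          have h2 := congrArg List.length hpre
          simpa [prefixUpTo_length] using h2
        have hphne : ph ≠ [] := by
          rintro rfl
          simp [prefixUpTo_getLast?] at hphlast
        have hL1 : 1 ≤ ph.length := List.length_pos_iff.mpr hphne
        have phElem : ∀ j, j < ph.length → ph[j]? = some (ρ (pre.length + j)) := by
          intro j hj
          have h2 : (pre ++ ph)[pre.length + j]? = ph[pre.length + j - pre.length]? :=
            List.getElem?_append_right (by omega)
          rw [hpre, show pre.length + j - pre.length = j from by omega] at h2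
          rw [← h2]
          rw [List.getElem?_eq_getElem (by rw [prefixUpTo_length]; omega)]
          unfold prefixUpTo
          rw [List.getElem_ofFn]
        have key : ∀ k, HistM (connGameOn G W) false (sc a) a
            (prefixUpTo (fun j => ρ (pre.length + j)) k) := by
          intro k
          rcases le_or_gt (k + 1) ph.length with hk | hk
          · have heq2 : prefixUpTo (fun j => ρ (pre.length + j)) k = ph.take (k + 1) := by
              apply List.ext_getElem?
              intro i
              rcases lt_or_ge i (k + 1) with hi | hi
              · rw [List.getElem?_take, if_pos hi,
                  List.getElem?_eq_getElem (by rw [prefixUpTo_length]; omega),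
                  phElem i (by omega)]
                unfold prefixUpTo
                rw [List.getElem_ofFn]
              · rw [List.getElem?_eq_none (by rw [prefixUpTo_length]; omega),
                  List.getElem?_eq_none (by rw [List.length_take]; omega)]
            rw [heq2]
            exact hphH.take_succ k
          · have heq2 : prefixUpTo (fun j => ρ (pre.length + j)) k =
                ph ++ (List.ofFn fun i : Fin (k + 1 - ph.length) => ρ (N + 1 + ↑i)) := by
              apply List.ext_getElem?
              intro i
              rcases lt_or_ge i (k + 1) with hi | hi
              · rw [List.getElem?_eq_getElem (by rw [prefixUpTo_length]; omega)]
                rcases lt_or_ge i ph.length with hi2 | hi2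
                · rw [List.getElem?_append_left hi2, phElem i hi2]
                  unfold prefixUpTo
                  rw [List.getElem_ofFn]
                · rw [List.getElem?_append_right hi2,
                    List.getElem?_eq_getElem (by simp; omega)]
                  rw [List.getElem_ofFn]
                  unfold prefixUpTo
                  rw [List.getElem_ofFn]
                  show some (ρ (pre.length + i)) = some (ρ (N + 1 + (i - ph.length)))
                  rw [show pre.length + i = N + 1 + (i - ph.length) from by omega]
              · rw [List.getElem?_eq_none (by rw [prefixUpTo_length]; omega),
                  List.getElem?_eq_none (by simp; omega)]
            rw [heq2]
            have hgrow := grow (k + 1 - ph.length)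
            exact ((hinvn (N + (k + 1 - ph.length))).2.2 _ _ _ hgrow).2.2.1
        obtain ⟨-, -, hwin'⟩ := (winsFrom_false_iff _ _ _).mp (hsc a (Or.inl haV0) haW)
        have h5 := hwin' _ key
        have h6 : InfSet (fun j => ρ (pre.length + j)) = (G.V0 ∩ W) ∪ (G.V1 ∩ W) := h5
        rw [infSet_shift] at h6
        have h7 : (G.V0 ∩ W) ∪ (G.V1 ∩ W) = W := by
          apply Set.Subset.antisymm
          · rintro x (⟨-, hx⟩ | ⟨-, hx⟩) <;> exact hx
          · intro x hx
            rcases hOm W hW hx with h2 | h2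
            · exact Or.inl ⟨h2, hx⟩
            · exact Or.inr ⟨h2, hx⟩
        rw [h6, h7]
        exact hW
    · -- Case B: outside the phases infinitely often
      push_neg at hA
      have lengrow : ∀ n, (simH G W w s (prefixUpTo ρ n)).2 = none →
          ((simH G W w s (prefixUpTo ρ (n + 1))).1).length =
            ((simH G W w s (prefixUpTo ρ n)).1).length + 1 := by
        intro n hn
        rcases simH_step G W w s ρ n with ⟨sh', heq, hc⟩ | ⟨sh', a, ph, heq, hc⟩
        · rcases hc with h' | ⟨h', -, -⟩ <;> rw [heq, h'] <;> simp
        · rw [heq] at hn; simp at hn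
      have unbdd : ∀ M, ∃ n, M ≤ ((simH G W w s (prefixUpTo ρ n)).1).length := by
        intro M
        induction M with
        | zero => exact ⟨0, by omega⟩
        | succ M ihM =>
            obtain ⟨n, hn⟩ := ihM
            obtain ⟨n', hn', hout⟩ := hA n
            have h1 := lengrow n' hout
            have h2 := (simH_chainLE G W w s ρ hn').length_le
            exact ⟨n' + 1, by omega⟩
      choose nf hnf using fun k => unbdd (k + 1)
      set ρ'' : ℕ → V := fun k => ((simH G W w s (prefixUpTo ρ (nf k))).1).getD k v0
        with hρ''
      have agree : ∀ n k, k < ((simH G W w s (prefixUpTo ρ n)).1).length →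
          ((simH G W w s (prefixUpTo ρ n)).1).getD k v0 = ρ'' k := by
        intro n k hk
        rcases le_total n (nf k) with h | h
        · obtain ⟨t, ht⟩ := simH_chainLE G W w s ρ h
          show _ = ((simH G W w s (prefixUpTo ρ (nf k))).1).getD k v0
          rw [← ht]
          simp [List.getD, List.getElem?_append_left hk]
        · obtain ⟨t, ht⟩ := simH_chainLE G W w s ρ h
          have hk2 : k < ((simH G W w s (prefixUpTo ρ (nf k))).1).length := hnf k
          show _ = ((simH G W w s (prefixUpTo ρ (nf k))).1).getD k v0
          rw [← ht]
          simp [List.getD, List.getElem?_append_left hk2]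
      have takeEq : ∀ n k, k < ((simH G W w s (prefixUpTo ρ n)).1).length →
          prefixUpTo ρ'' k = ((simH G W w s (prefixUpTo ρ n)).1).take (k + 1) := by
        intro n k hk
        apply List.ext_getElem?
        intro i
        rcases lt_or_ge i (k + 1) with hi | hi
        · rw [List.getElem?_take, if_pos hi,
            List.getElem?_eq_getElem (by rw [prefixUpTo_length]; omega),
            List.getElem?_eq_getElem (by omega)]
          have h2 := agree n i (by omega)
          rw [List.getD_eq_getElem _ _ (by omega : i < _)] at h2
          unfold prefixUpTo
          rw [List.getElem_ofFn]
          exact congrArg some h2.symm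
        · rw [List.getElem?_eq_none (by rw [prefixUpTo_length]; omega),
            List.getElem?_eq_none (by rw [List.length_take]; omega)]
      have histsh : ∀ n, HistM (horn G W w) false s v0
          ((simH G W w s (prefixUpTo ρ n)).1) := by
        intro n
        rcases hsimeq : simH G W w s (prefixUpTo ρ n) with ⟨shn, st⟩
        cases st with
        | none => exact ((hinvn n).2.1 shn hsimeq).1
        | some ap =>
            obtain ⟨a, ph⟩ := ap
            exact ((hinvn n).2.2 shn a ph hsimeq).1
      have hplay'' : InfPlayM (horn G W w) false s v0 ρ'' := by
        intro k
        rw [takeEq (nf k) k (hnf k)]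
        exact (histsh (nf k)).take_succ k
      have hΩ'' : InfSet ρ'' ∈ (horn G W w).Omega := hswin ρ'' hplay''
      -- counting arguments
      have count_i : ∀ v, v ≠ w → ∀ n,
          ((simH G W w s (prefixUpTo ρ n)).1).count v ≤ (prefixUpTo ρ n).count v := by
        intro v hvw n
        induction n with
        | zero =>
            rw [hsim0, prefixUpTo_zero]
        | succ n ihn =>
            have hmono : (prefixUpTo ρ n).count v ≤ (prefixUpTo ρ (n + 1)).count v := by
              rw [prefixUpTo_succ, List.count_append]; omega
            rcases simH_step G W w s ρ n with ⟨sh', heq, hc⟩ | ⟨sh', a, ph, heq, hc⟩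
            · rw [heq] at ihn
              have ihn' : sh'.count v ≤ (prefixUpTo ρ n).count v := ihn
              rcases hc with h' | ⟨h', -, -⟩
              · rw [h', prefixUpTo_succ]
                show (sh' ++ [ρ (n + 1)]).count v ≤ _
                rw [List.count_append, List.count_append]
                omega
              · rw [h']
                show (sh' ++ [w]).count v ≤ _
                rw [List.count_append]
                have hz : ([w] : List V).count v = 0 :=
                  List.count_eq_zero.mpr (by simp [hvw])
                omega
            · rw [heq] at ihn
              have ihn' : sh'.count v ≤ (prefixUpTo ρ n).count v := ihn
              rcases hc with ⟨-, h'⟩ | ⟨-, h'⟩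
              · rw [h']
                show sh'.count v ≤ _
                omega
              · rw [h', prefixUpTo_succ]
                show (sh' ++ [ρ (n + 1)]).count v ≤ _
                rw [List.count_append, List.count_append]
                omega
      have count_ii : ∀ v, v ∉ W → v ≠ w → ∀ n,
          (prefixUpTo ρ n).count v ≤ ((simH G W w s (prefixUpTo ρ n)).1).count v := by
        intro v hvW hvw n
        induction n with
        | zero =>
            rw [hsim0, prefixUpTo_zero]
        | succ n ihn =>
            rcases simH_step G W w s ρ n with ⟨sh', heq, hc⟩ | ⟨sh', a, ph, heq, hc⟩
            · rw [heq] at ihn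
              have ihn' : (prefixUpTo ρ n).count v ≤ sh'.count v := ihn
              rcases hc with h' | ⟨h', -, hWn1⟩
              · rw [h', prefixUpTo_succ]
                show _ ≤ (sh' ++ [ρ (n + 1)]).count v
                rw [List.count_append, List.count_append]
                omega
              · rw [h', prefixUpTo_succ]
                show _ ≤ (sh' ++ [w]).count v
                rw [List.count_append, List.count_append]
                have hz : ([ρ (n + 1)] : List V).count v = 0 :=
                  List.count_eq_zero.mpr (by
                    simp only [List.mem_singleton]
                    exact fun h2 => hvW (h2 ▸ hWn1))
                omega
            · rw [heq] at ihn
              have ihn' : (prefixUpTo ρ n).count v ≤ sh'.count v := ihn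
              rcases hc with ⟨hWn1, h'⟩ | ⟨-, h'⟩
              · rw [h', prefixUpTo_succ]
                show _ ≤ sh'.count v
                rw [List.count_append]
                have hz : ([ρ (n + 1)] : List V).count v = 0 :=
                  List.count_eq_zero.mpr (by
                    simp only [List.mem_singleton]
                    exact fun h2 => hvW (h2 ▸ hWn1))
                omega
              · rw [h', prefixUpTo_succ]
                show _ ≤ (sh' ++ [ρ (n + 1)]).count v
                rw [List.count_append, List.count_append]
                omega
      have hI : ∀ v, v ≠ w → v ∈ InfSet ρ'' → v ∈ InfSet ρ := by
        intro v hvw hv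
        rw [infSet_iff_count] at hv ⊢
        intro M
        obtain ⟨k, hk⟩ := hv M
        rw [takeEq (nf k) k (hnf k)] at hk
        have h1 : M ≤ ((simH G W w s (prefixUpTo ρ (nf k))).1).count v :=
          le_trans hk ((List.take_sublist _ _).count_le v)
        exact ⟨nf k, le_trans h1 (count_i v hvw (nf k))⟩
      have hII : ∀ v, v ∉ W → v ≠ w → v ∈ InfSet ρ → v ∈ InfSet ρ'' := by
        intro v hvW hvw hv
        rw [infSet_iff_count] at hv ⊢
        intro M
        obtain ⟨n, hn⟩ := hv M
        have h1 : M ≤ ((simH G W w s (prefixUpTo ρ n)).1).count v :=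
          le_trans hn (count_ii v hvW hvw n)
        have hne : (simH G W w s (prefixUpTo ρ n)).1 ≠ [] := (histsh n).ne_nil
        have hlp : 0 < ((simH G W w s (prefixUpTo ρ n)).1).length :=
          List.length_pos_iff.mpr hne
        refine ⟨((simH G W w s (prefixUpTo ρ n)).1).length - 1, ?_⟩
        rw [takeEq n _ (by omega), List.take_of_length_le (by omega)]
        exact h1
      have hwρ : w ∉ InfSet ρ := by
        intro hc
        obtain ⟨n, -, hn⟩ := hc 0
        exact hw (hn ▸ RV n)
      obtain ⟨hmem, -⟩ := hΩ''
      by_cases hwIn : w ∈ InfSet ρ''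
      · -- infinitely many phases: `Inf(ρ'') = W' ∪ {w}`
        rcases hmem with hmem | hmem
        · exact absurd (hOm _ hmem hwIn) hw
        · obtain ⟨W', hW', hWW', hEq⟩ := hmem
          have hgoal : InfSet ρ = W' := by
            apply Set.Subset.antisymm
            · intro v hv
              have hvw : v ≠ w := fun h2 => hwρ (h2 ▸ hv)
              by_cases hvWm : v ∈ W
              · exact hWW'.subset hvWm
              · have h2 := hII v hvWm hvw hv
                rw [hEq] at h2
                rcases h2 with h2 | h2
                · exact h2
                · exact absurd h2 hvw
            · intro v hv
              have hvverts : v ∈ G.verts := hOm W' hW' hv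
              have hvw : v ≠ w := fun h2 => hw (h2 ▸ hvverts)
              exact hI v hvw (by rw [hEq]; exact Or.inl hv)
          rw [hgoal]
          exact hW'
      · -- finitely many phases: `Inf(ρ) = Inf(ρ'') ∈ Ω`
        have hΩG : InfSet ρ'' ∈ G.Omega := by
          rcases hmem with hmem | hmem
          · exact hmem
          · obtain ⟨W', -, -, hEq⟩ := hmem
            exact absurd (by rw [hEq]; exact Or.inr rfl) hwIn
        have hKw : ∃ K, ∀ p, K ≤ p → ρ'' p ≠ w := by
          by_contra hc
          push_neg at hc
          exact hwIn fun N => hc N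
        obtain ⟨K, hK⟩ := hKw
        obtain ⟨n₀, hn₀⟩ := unbdd (K + 2)
        have hout : ∀ n, n₀ ≤ n → (simH G W w s (prefixUpTo ρ n)).2 = none := by
          intro n hn
          rcases hsimeq : simH G W w s (prefixUpTo ρ n) with ⟨shn, st⟩
          cases st with
          | none => rfl
          | some ap =>
              exfalso
              obtain ⟨a, ph⟩ := ap
              obtain ⟨-, hshw, -⟩ := (hinvn n).2.2 shn a ph hsimeq
              obtain ⟨sh₁, rfl⟩ := eq_append_getLast hshw
              have hlen2 : K + 2 ≤ (sh₁ ++ [w]).length := by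
                have h2 := (simH_chainLE G W w s ρ hn).length_le
                rw [hsimeq] at h2
                exact le_trans hn₀ h2
              have hval : ρ'' sh₁.length = w := by
                have h3 := agree n sh₁.length (by rw [hsimeq]; simp)
                rw [hsimeq] at h3
                rw [← h3]
                show (sh₁ ++ [w]).getD sh₁.length v0 = w
                simp [List.getD, List.getElem?_concat_length]
              exact hK sh₁.length (by simp at hlen2; omega) hval
        have hstep' : ∀ n, n₀ ≤ n → (simH G W w s (prefixUpTo ρ (n + 1))).1 =
            (simH G W w s (prefixUpTo ρ n)).1 ++ [ρ (n + 1)] := by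
          intro n hn
          rcases simH_step G W w s ρ n with ⟨sh', heq, hc⟩ | ⟨sh', a, ph, heq, hc⟩
          · rcases hc with h' | ⟨h', -, -⟩
            · rw [heq, h']
            · have h2 := hout (n + 1) (by omega)
              rw [h'] at h2
              simp at h2
          · have h2 := hout n hn
            rw [heq] at h2
            simp at h2
        have hsub : InfSet ρ ⊆ InfSet ρ'' := by
          intro v hv
          show ∀ M, ∃ p, M ≤ p ∧ ρ'' p = v
          intro M
          obtain ⟨n₁, hn₁⟩ := unbdd (M + 1)
          obtain ⟨n', hn', hρn'⟩ := hv (max n₁ n₀ + 1)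
          have h3 := hstep' (n' - 1) (by omega)
          rw [show n' - 1 + 1 = n' from by omega] at h3
          refine ⟨((simH G W w s (prefixUpTo ρ (n' - 1))).1).length, ?_, ?_⟩
          · have h4 := (simH_chainLE G W w s ρ (show n₁ ≤ n' - 1 by omega)).length_le
            omega
          · have h5 := agree n' ((simH G W w s (prefixUpTo ρ (n' - 1))).1).length
              (by rw [h3]; simp)
            rw [← h5, h3]
            simp [List.getD, List.getElem?_concat_length, hρn']
        have hsub2 : InfSet ρ'' ⊆ InfSet ρ := fun v hv =>
          hI v (fun h2 => hwIn (h2 ▸ hv)) hv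
        rw [Set.Subset.antisymm hsub hsub2]
        exact hΩG

end Aux

/-- If `W ∈ Ω`, the arena of `G(W)` is forced-connected, `W` is not a
1-trap in `G`, and `w ∉ V` is the fresh player-1 vertex `𝐖` of Horn's construction
`G_W`, then `Win_0(G_W) \ {𝐖} ⊆ Win_0(G)`. -/
theorem stmt14 [Fintype V] (G : MullerGame V) (W : Set V) (w : V)
    (hdisj : Disjoint G.V0 G.V1)
    (hEsub : G.E ⊆ (G.V0 ×ˢ G.V1) ∪ (G.V1 ×ˢ G.V0))
    (hOm : ∀ W' ∈ G.Omega, W' ⊆ G.verts)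
    (hW : W ∈ G.Omega)
    (hfc : ForcedConnectedOn G W)
    (hnt : ¬ IsTrap G true W)
    (hw : w ∉ G.verts) :
    WinSet (horn G W w) false \ {w} ⊆ WinSet G false := by
  intro v0 hv0'
  obtain ⟨⟨hv0verts, s, hs⟩, hv0w⟩ := hv0'
  have hv0w' : v0 ≠ w := hv0w
  have hv0G : v0 ∈ G.verts := by
    rcases hv0verts with h | h
    · exact Or.inl h
    · rcases h with h | h
      · exact Or.inr h
      · exact absurd h hv0w'
  have hsc' : ∀ v : V, ∃ t : List V → V,
      v ∈ G.verts → v ∈ W → WinsFrom (connGameOn G W) false t v := by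
    intro v
    by_cases hv : v ∈ (connGameOn G W).verts
    · obtain ⟨t, ht⟩ := hfc v hv
      exact ⟨t, fun _ _ => ht⟩
    · refine ⟨fun _ => v, fun h1 h2 => absurd ?_ hv⟩
      rcases h1 with h1 | h1
      · exact Or.inl ⟨h1, h2⟩
      · exact Or.inr ⟨h1, h2⟩
  choose sc hsc using hsc'
  exact ⟨hv0G, tstr G W w s sc,
    tstr_wins hdisj hEsub hOm hW hw hv0G hs hsc⟩
end Games
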